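/- The number of entries in row n of Pascal's triangle that are not divisible by a prime p equals the product over the base-p digits d_i of n of (d_i + 1). -/

import Mathlib

open Finset

private lemma lucas_iff (p : ℕ) (hp : p.Prime) (n k : ℕ) :
    ¬ p ∣ n.choose k ↔ k % p ≤ n % p ∧ ¬ p ∣ (n / p).choose (k / p) := by
  haveI : Fact p.Prime := ⟨hp⟩
  have hp2 := hp.two_le
  have hL := Choose.choose_modEq_choose_mod_mul_choose_div_nat (n := n) (k := k) (p := p)
  have hdvd : p ∣ n.choose k ↔ p ∣ (n % p).choose (k % p) * (n / p).choose (k / p) := by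
    constructor <;> intro h
    · exact (Nat.modEq_zero_iff_dvd).mp ((Nat.modEq_zero_iff_dvd.mpr h).symm.trans hL).symm
    · exact (Nat.modEq_zero_iff_dvd).mp (hL.trans (Nat.modEq_zero_iff_dvd.mpr h))
  rw [hdvd, hp.dvd_mul]
  have hnp : n % p < p := Nat.mod_lt _ (by omega)
  have hnot : ¬ p ∣ (n % p).choose (k % p) ↔ k % p ≤ n % p := by
    constructor
    · intro h
      by_contra hle
      push_neg at hle
      exact h (by rw [Nat.choose_eq_zero_of_lt hle]; exact dvd_zero p)
    · intro hle h
      have h1 : p ∣ (n % p).factorial := by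
        rw [← Nat.choose_mul_factorial_mul_factorial hle]
        exact Dvd.dvd.mul_right (Dvd.dvd.mul_right h _) _
      have := (Nat.Prime.dvd_factorial hp).mp h1
      omega
  tauto

private lemma step (p : ℕ) (hp : p.Prime) (n : ℕ) :
    ((Finset.range (n + 1)).filter (fun k => ¬ p ∣ n.choose k)).card =
      (n % p + 1) *
      ((Finset.range (n / p + 1)).filter (fun k => ¬ p ∣ (n / p).choose k)).card := by
  have hp2 := hp.two_le
  rw [← Finset.card_range (n % p + 1), ← Finset.card_product]
  apply Finset.card_bij' (fun k _ => (k % p, k / p)) (fun x _ => x.1 + p * x.2)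
  · intro k hk
    simp only [Finset.mem_filter, Finset.mem_range] at hk
    have h := (lucas_iff p hp n k).mp hk.2
    have hkn : k / p ≤ n / p := Nat.div_le_div_right (by omega)
    simp only [Finset.mem_product, Finset.mem_range, Finset.mem_filter]
    exact ⟨by omega, by omega, h.2⟩
  · intro x hx
    simp only [Finset.mem_product, Finset.mem_range, Finset.mem_filter] at hx
    obtain ⟨h1, h2, h3⟩ := hx
    have hx1p : x.1 < p := by have := Nat.mod_lt n (by omega : 0 < p); omega
    have hmod : (x.1 + p * x.2) % p = x.1 := by
      rw [Nat.add_mul_mod_self_left, Nat.mod_eq_of_lt hx1p]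
    have hdiv : (x.1 + p * x.2) / p = x.2 := by
      rw [Nat.add_mul_div_left _ _ (by omega : 0 < p), Nat.div_eq_of_lt hx1p]; omega
    simp only [Finset.mem_filter, Finset.mem_range]
    constructor
    · have hle : x.1 + p * x.2 ≤ n % p + p * (n / p) := by
        have : x.2 ≤ n / p := by omega
        nlinarith
      have := Nat.mod_add_div n p
      omega
    · rw [lucas_iff p hp, hmod, hdiv]
      exact ⟨by omega, h3⟩
  · intro k _
    simp [Nat.mod_add_div]
  · intro x hx
    simp only [Finset.mem_product, Finset.mem_range, Finset.mem_filter] at hx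
    have hx1p : x.1 < p := by have := Nat.mod_lt n (by omega : 0 < p); omega
    have hmod : (x.1 + p * x.2) % p = x.1 := by
      rw [Nat.add_mul_mod_self_left, Nat.mod_eq_of_lt hx1p]
    have hdiv : (x.1 + p * x.2) / p = x.2 := by
      rw [Nat.add_mul_div_left _ _ (by omega : 0 < p), Nat.div_eq_of_lt hx1p]; omega
    simp [hmod, hdiv]

private lemma aux (p : ℕ) (hp : p.Prime) : ∀ a n, n < p ^ a →
    ((Finset.range (n + 1)).filter (fun k => ¬ p ∣ n.choose k)).card =
      ∏ i ∈ Finset.range a, (n / p ^ i % p + 1) := by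
  have hp2 := hp.two_le
  intro a
  induction a with
  | zero =>
    intro n hn
    have : n = 0 := by simpa using hn
    subst this
    simp [Nat.choose_self, Nat.dvd_one, hp.ne_one, Finset.filter_singleton]
  | succ a ih =>
    intro n hn
    rw [step p hp n, Finset.prod_range_succ']
    have hdiv : n / p < p ^ a := by
      rw [Nat.div_lt_iff_lt_mul (by omega : 0 < p), ← pow_succ]
      exact hn
    rw [ih (n / p) hdiv]
    simp only [pow_zero, Nat.div_one]
    rw [mul_comm]
    congr 1
    apply Finset.prod_congr rfl
    intro i _
    rw [Nat.div_div_eq_div_mul, ← pow_succ']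

theorem row_count_not_dvd (p : ℕ) (hp : p.Prime) (n : ℕ) :
    ((Finset.range (n + 1)).filter (fun k => ¬ p ∣ n.choose k)).card =
      ∏ i ∈ Finset.range (n + 1), (n / p ^ i % p + 1) := by
  apply aux p hp
  calc n < 2 ^ (n + 1) := by
        have := Nat.lt_two_pow_self (n := n)
        have : 2 ^ n ≤ 2 ^ (n + 1) := Nat.pow_le_pow_right (by omega) (by omega)
        omega
    _ ≤ p ^ (n + 1) := Nat.pow_le_pow_left hp.two_le _
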